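/- Suppose Assumptions 1 and 3 hold; define π(R) = ∫₀^∞ max{0, mz − R} dΦ(z), ψ_f(R) = βπ(R)/(1 − βR) for R ∈ [1, 1/β), and ψ_b(R) = (β/(1−β))·π(R)/R for R ∈ [1, ∞). Then ψ_f is continuous and strictly increasing with ψ_f(1) = 1/λ̄ and ψ_f(R) → ∞ as R ↑ 1/β (so its range is [1/λ̄, ∞)), and ψ_b is continuous and strictly decreasing with ψ_b(1) = 1/λ̄ and ψ_b(R) → 0 as R → ∞ (so its range is (0, 1/λ̄]). (Lemma on the equilibrium-rate maps ψ_f and ψ_b.) -/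

import Mathlib

open Filter Topology MeasureTheory

/-- **Assumption 1.** `Φ` (the law `μ` of productivity) is an absolutely continuous
cdf on `[0,∞)` with `Φ(z) < 1` for all `z` and a finite mean. -/
structure Assumption1 (μ : Measure ℝ) : Prop where
  prob : IsProbabilityMeasure μ
  supp : μ (Set.Iio 0) = 0
  absCont : μ ≪ MeasureTheory.volume
  lt_one : ∀ z : ℝ, μ (Set.Iic z) < 1
  finite_mean : Integrable id μ

/-- The cdf `Φ` of the productivity distribution `μ`. -/
noncomputable def Phi (μ : Measure ℝ) (z : ℝ) : ℝ := (μ (Set.Iic z)).toReal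

/-- The risk premium `π(R) = ∫ max{0, mz − R} dΦ(z)` on unlevered capital investment. -/
noncomputable def premium (μ : Measure ℝ) (m R : ℝ) : ℝ := ∫ z, max 0 (m * z - R) ∂μ

/-- The leverage threshold `λ̄ = ((1−β)/β)·(∫ max{mz−1, 0} dΦ(z))⁻¹`. -/
noncomputable def lamBar (β m : ℝ) (μ : Measure ℝ) : ℝ :=
  ((1 - β) / β) * (∫ z, max (m * z - 1) 0 ∂μ)⁻¹

/-- **Trend stationary equilibrium** of the two-sector large open economy with linear
technology `F(K,X) = mK + DX`: gross risk-free rate `R > 1`, growth rate `G > 0`,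
threshold `z̄ = R/m` with `Φ(z̄) > 1 − 1/λ`, and sequences of aggregate wealth,
capital, land price, and external savings satisfying the equilibrium conditions,
with `B_t/W_t → 0`. -/
structure TSE (μ : Measure ℝ) (β lam m D : ℝ)
    (R G : ℝ) (W K P B : ℕ → ℝ) : Prop where
  hR : 1 < R
  hG : 0 < G
  hthr : 1 - 1 / lam < Phi μ (R / m)
  hW : ∀ t, 0 < W t
  hP : ∀ t, 0 < P t
  price : ∀ t, R = (P (t + 1) + D) / P t
  growth : G = β * (R + lam * premium μ m R)
  Wdyn : ∀ t, W (t + 1) = G * W t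
  Kdyn : ∀ t, K (t + 1) = β * lam * W t * ∫ z in Set.Ioi (R / m), z ∂μ
  bond : ∀ t, P t + B t = β * (lam * Phi μ (R / m) + 1 - lam) * W t
  wealth : ∀ t, W (t + 1) = m * K (t + 1) + R * (P t + B t)
  hBW : Filter.Tendsto (fun t => B t / W t) Filter.atTop (nhds 0)

/-- `ψ_f(R) = βπ(R)/(1 − βR)`, defined for `R ∈ [1, 1/β)`. -/
noncomputable def psiF (μ : Measure ℝ) (β m R : ℝ) : ℝ :=
  β * premium μ m R / (1 - β * R)

/-- `ψ_b(R) = (β/(1−β))·π(R)/R`, defined for `R ∈ [1, ∞)`. -/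
noncomputable def psiB (μ : Measure ℝ) (β m R : ℝ) : ℝ :=
  β / (1 - β) * (premium μ m R / R)

section AuxPsi

variable {μ : Measure ℝ} {β m : ℝ}

lemma aux_int (hμ : Assumption1 μ) (m R : ℝ) :
    Integrable (fun z => max 0 (m * z - R)) μ := by
  haveI := hμ.prob
  have h1 : Integrable (fun z => m * z - R) μ := by
    exact (hμ.finite_mean.const_mul m).sub (integrable_const R)
  refine h1.mono ((continuous_const.max (by fun_prop)).aestronglyMeasurable) ?_
  filter_upwards with z
  simp only [Real.norm_eq_abs]
  rw [abs_of_nonneg (le_max_left _ _)]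
  exact max_le (abs_nonneg _) (le_abs_self _)

lemma prem_nonneg (μ : Measure ℝ) (m R : ℝ) : 0 ≤ premium μ m R :=
  integral_nonneg fun z => le_max_left _ _

lemma prem_eq_set (hm : 0 < m) (R : ℝ) :
    premium μ m R = ∫ z in Set.Ioi (R / m), (m * z - R) ∂μ := by
  rw [premium, ← integral_indicator measurableSet_Ioi]
  congr 1; ext z
  by_cases hz : z ∈ Set.Ioi (R / m)
  · rw [Set.indicator_of_mem hz]
    rw [Set.mem_Ioi, div_lt_iff₀ hm] at hz
    exact max_eq_right (by linarith [mul_comm z m])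
  · rw [Set.indicator_of_notMem hz]
    rw [Set.mem_Ioi, not_lt] at hz
    have h1 : z * m ≤ R := (le_div_iff₀ hm).mp hz
    exact max_eq_left (by linarith [mul_comm z m])

lemma measIoi_pos (hμ : Assumption1 μ) (a : ℝ) : 0 < (μ (Set.Ioi a)).toReal := by
  haveI := hμ.prob
  have hc : μ (Set.Ioi a) = 1 - μ (Set.Iic a) := by
    rw [← Set.compl_Iic, measure_compl measurableSet_Iic (measure_ne_top _ _),
      measure_univ]
  refine ENNReal.toReal_pos ?_ (measure_ne_top _ _)
  rw [hc]
  exact (tsub_pos_of_lt (hμ.lt_one a)).ne'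

lemma indic_int (μ : Measure ℝ) [IsProbabilityMeasure μ] (s : Set ℝ) (hs : MeasurableSet s) (c : ℝ) :
    Integrable (s.indicator fun _ => c) μ :=
  (integrable_const c).indicator hs

lemma prem_upper (hμ : Assumption1 μ) (hm : 0 < m) {R R' : ℝ} (h : R ≤ R') :
    premium μ m R ≤ premium μ m R' + (R' - R) * (μ (Set.Ioi (R / m))).toReal := by
  haveI := hμ.prob
  have hint : Integrable (fun z => max 0 (m * z - R') +
      (Set.Ioi (R / m)).indicator (fun _ => R' - R) z) μ :=
    (aux_int hμ m R').add (indic_int μ _ measurableSet_Ioi _)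
  have hle : premium μ m R ≤ ∫ z, (max 0 (m * z - R') +
      (Set.Ioi (R / m)).indicator (fun _ => R' - R) z) ∂μ := by
    refine integral_mono (aux_int hμ m R) hint fun z => ?_
    by_cases hz : z ∈ Set.Ioi (R / m)
    · rw [Set.indicator_of_mem hz]
      exact max_le (add_nonneg (le_max_left _ _) (by linarith))
        (by linarith [le_max_right 0 (m * z - R')])
    · rw [Set.indicator_of_notMem hz, add_zero]
      rw [Set.mem_Ioi, not_lt] at hz
      have h1 : z * m ≤ R := (le_div_iff₀ hm).mp hz
      calc max 0 (m * z - R) = 0 := max_eq_left (by linarith [mul_comm z m])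
        _ ≤ max 0 (m * z - R') := le_max_left _ _
  rwa [integral_add (aux_int hμ m R') (indic_int μ _ measurableSet_Ioi _),
    integral_indicator measurableSet_Ioi, setIntegral_const, smul_eq_mul,
    mul_comm] at hle

lemma prem_lower (hμ : Assumption1 μ) (hm : 0 < m) {R R' : ℝ} (h : R ≤ R') :
    premium μ m R' + (R' - R) * (μ (Set.Ioi (R' / m))).toReal ≤ premium μ m R := by
  haveI := hμ.prob
  have hint : Integrable (fun z => max 0 (m * z - R') +
      (Set.Ioi (R' / m)).indicator (fun _ => R' - R) z) μ :=
    (aux_int hμ m R').add (indic_int μ _ measurableSet_Ioi _)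
  have hle : (∫ z, (max 0 (m * z - R') +
      (Set.Ioi (R' / m)).indicator (fun _ => R' - R) z) ∂μ) ≤ premium μ m R := by
    refine integral_mono hint (aux_int hμ m R) fun z => ?_
    by_cases hz : z ∈ Set.Ioi (R' / m)
    · rw [Set.indicator_of_mem hz]
      rw [Set.mem_Ioi, div_lt_iff₀ hm] at hz
      have h1 : R' < m * z := by linarith [mul_comm z m]
      rw [max_eq_right (by linarith : (0:ℝ) ≤ m * z - R'),
        max_eq_right (by linarith : (0:ℝ) ≤ m * z - R)]
      linarith
    · rw [Set.indicator_of_notMem hz, add_zero]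
      exact max_le_max le_rfl (by linarith)
  rwa [integral_add (aux_int hμ m R') (indic_int μ _ measurableSet_Ioi _),
    integral_indicator measurableSet_Ioi, setIntegral_const, smul_eq_mul,
    mul_comm] at hle

lemma prem_pos (hμ : Assumption1 μ) (hm : 0 < m) (R : ℝ) : 0 < premium μ m R := by
  have h := prem_lower hμ hm (le_of_lt (lt_add_one R))
  have h2 := prem_nonneg μ m (R + 1)
  have h3 := measIoi_pos hμ ((R + 1) / m)
  nlinarith

lemma prem_anti (hμ : Assumption1 μ) (hm : 0 < m) {R R' : ℝ} (h : R ≤ R') :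
    premium μ m R' ≤ premium μ m R := by
  have h1 := prem_lower hμ hm h
  have h2 := measIoi_pos hμ (R' / m)
  nlinarith

lemma prem_cont (hμ : Assumption1 μ) (m : ℝ) : Continuous (premium μ m) := by
  haveI := hμ.prob
  refine (LipschitzWith.of_dist_le_mul (K := 1) fun R R' => ?_).continuous
  rw [Real.dist_eq, Real.dist_eq, NNReal.coe_one, one_mul, premium, premium,
    ← integral_sub (aux_int hμ m R) (aux_int hμ m R')]
  calc |∫ z, (max 0 (m * z - R) - max 0 (m * z - R')) ∂μ|
      ≤ ∫ z, |max 0 (m * z - R) - max 0 (m * z - R')| ∂μ := by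
        simpa [Real.norm_eq_abs] using
          norm_integral_le_integral_norm (fun z => max 0 (m * z - R) - max 0 (m * z - R'))
    _ ≤ ∫ _z, |R - R'| ∂μ := by
        refine integral_mono ((aux_int hμ m R).sub (aux_int hμ m R')).abs
          (integrable_const _) fun z => ?_
        rw [max_comm 0 (m * z - R), max_comm 0 (m * z - R')]
        calc |max (m * z - R) 0 - max (m * z - R') 0|
            ≤ |(m * z - R) - (m * z - R')| := abs_max_sub_max_le_abs _ _ _
          _ = |R - R'| := by rw [show (m * z - R) - (m * z - R') = -(R - R') by ring,
              abs_neg]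
    _ = |R - R'| := by simp

lemma key_pos (hμ : Assumption1 μ) (hβ : β ∈ Set.Ioo (0 : ℝ) 1) (hm : 0 < m)
    (hA3 : 1 - Phi μ (1 / m) < β * m * ∫ z in Set.Ioi (1 / m), z ∂μ)
    {a : ℝ} (ha : 1 / m ≤ a) :
    0 < ∫ z in Set.Ioi a, (β * m * z - 1) ∂μ := by
  haveI := hμ.prob
  have hβm : 0 < β * m := mul_pos hβ.1 hm
  have hint : Integrable (fun z => β * m * z - 1) μ := by
    exact (hμ.finite_mean.const_mul (β * m)).sub (integrable_const 1)
  have hIoi : ∀ b : ℝ, (μ (Set.Iic b)).toReal + (μ (Set.Ioi b)).toReal = 1 := by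
    intro b
    rw [← ENNReal.toReal_add (measure_ne_top _ _) (measure_ne_top _ _), ← Set.compl_Iic,
      measure_add_measure_compl measurableSet_Iic, measure_univ, ENNReal.toReal_one]
  have hbase : 0 < ∫ z in Set.Ioi (1 / m), (β * m * z - 1) ∂μ := by
    have hsplit : (∫ z in Set.Ioi (1 / m), (β * m * z - 1) ∂μ) =
        β * m * (∫ z in Set.Ioi (1 / m), z ∂μ) - (μ (Set.Ioi (1 / m))).toReal := by
      rw [integral_sub (by exact (hμ.finite_mean.const_mul (β * m)).integrableOn)
        (integrable_const _),
        setIntegral_const, smul_eq_mul, mul_one, ← integral_const_mul, measureReal_def]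
    have hq : (μ (Set.Ioi (1 / m))).toReal = 1 - Phi μ (1 / m) := by
      have := hIoi (1 / m); unfold Phi; linarith
    rw [hsplit, hq]; linarith
  by_cases hcase : a ≤ 1 / (β * m)
  · have hsplit : (∫ z in Set.Ioi (1 / m), (β * m * z - 1) ∂μ) =
        (∫ z in Set.Ioc (1 / m) a, (β * m * z - 1) ∂μ) +
        ∫ z in Set.Ioi a, (β * m * z - 1) ∂μ := by
      rw [← setIntegral_union (Set.Ioc_disjoint_Ioi le_rfl) measurableSet_Ioi
        hint.integrableOn hint.integrableOn, Set.Ioc_union_Ioi_eq_Ioi ha]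
    have hneg : (∫ z in Set.Ioc (1 / m) a, (β * m * z - 1) ∂μ) ≤ 0 := by
      refine setIntegral_nonpos measurableSet_Ioc fun z hz => ?_
      have : z ≤ 1 / (β * m) := le_trans hz.2 hcase
      rw [le_div_iff₀ hβm] at this
      nlinarith [this]
    linarith [hsplit ▸ hbase]
  · push_neg at hcase
    have hpos : 0 < β * m * a - 1 := by
      rw [div_lt_iff₀ hβm] at hcase; nlinarith [hcase]
    have hmono : (∫ z in Set.Ioi a, (β * m * a - 1) ∂μ) ≤
        ∫ z in Set.Ioi a, (β * m * z - 1) ∂μ := by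
      refine setIntegral_mono_on (integrableOn_const (measure_ne_top _ _))
        hint.integrableOn measurableSet_Ioi fun z hz => ?_
      have : a ≤ z := le_of_lt hz
      nlinarith
    have : (0:ℝ) < (μ (Set.Ioi a)).toReal * (β * m * a - 1) :=
      mul_pos (measIoi_pos hμ a) hpos
    rw [setIntegral_const, smul_eq_mul, measureReal_def] at hmono
    linarith

lemma key_ineq (hμ : Assumption1 μ) (hβ : β ∈ Set.Ioo (0 : ℝ) 1) (hm : 0 < m)
    (hA3 : 1 - Phi μ (1 / m) < β * m * ∫ z in Set.Ioi (1 / m), z ∂μ)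
    {R : ℝ} (hR : 1 ≤ R) :
    (1 - β * R) * (μ (Set.Ioi (R / m))).toReal < β * premium μ m R := by
  haveI := hμ.prob
  have ha : 1 / m ≤ R / m := by gcongr
  have hg := key_pos hμ hβ hm hA3 ha
  have hi1 : IntegrableOn (fun z => β * (m * z - R)) (Set.Ioi (R / m)) μ := by
    have h0 : Integrable (fun z => β * m * z - β * R) μ := by
      exact (hμ.finite_mean.const_mul (β * m)).sub (integrable_const (β * R))
    exact (h0.congr (by filter_upwards with z; ring)).integrableOn
  have h1 : β * premium μ m R - (1 - β * R) * (μ (Set.Ioi (R / m))).toReal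
      = ∫ z in Set.Ioi (R / m), (β * m * z - 1) ∂μ := by
    rw [prem_eq_set hm, ← integral_const_mul]
    have h2 : (1 - β * R) * (μ (Set.Ioi (R / m))).toReal
        = ∫ _z in Set.Ioi (R / m), (1 - β * R) ∂μ := by
      rw [setIntegral_const, smul_eq_mul, mul_comm, measureReal_def]
    rw [h2, ← integral_sub hi1 (integrableOn_const (measure_ne_top _ _))]
    congr 1; ext z; ring
  linarith

end AuxPsi

/-- **Lemma on the equilibrium-rate maps.** Under Assumptions 1 and 3, `ψ_f` is
continuous and strictly increasing on `[1, 1/β)` with `ψ_f(1) = 1/λ̄` and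
`ψ_f(R) → ∞` as `R ↑ 1/β` (range `[1/λ̄, ∞)`), while `ψ_b` is continuous and strictly
decreasing on `[1, ∞)` with `ψ_b(1) = 1/λ̄` and `ψ_b(R) → 0` as `R → ∞`
(range `(0, 1/λ̄]`). -/
theorem psi_lemma
    (μ : Measure ℝ) (hμ : Assumption1 μ)
    (β m : ℝ) (hβ : β ∈ Set.Ioo (0 : ℝ) 1) (hm : 0 < m)
    (hA3 : 1 - Phi μ (1 / m) < β * m * ∫ z in Set.Ioi (1 / m), z ∂μ) :
    ContinuousOn (psiF μ β m) (Set.Ico 1 (1 / β)) ∧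
    StrictMonoOn (psiF μ β m) (Set.Ico 1 (1 / β)) ∧
    psiF μ β m 1 = (lamBar β m μ)⁻¹ ∧
    Tendsto (psiF μ β m) (nhdsWithin (1 / β) (Set.Ico 1 (1 / β))) atTop ∧
    psiF μ β m '' Set.Ico 1 (1 / β) = Set.Ici (lamBar β m μ)⁻¹ ∧
    ContinuousOn (psiB μ β m) (Set.Ici 1) ∧
    StrictAntiOn (psiB μ β m) (Set.Ici 1) ∧
    psiB μ β m 1 = (lamBar β m μ)⁻¹ ∧
    Tendsto (psiB μ β m) atTop (𝓝 0) ∧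
    psiB μ β m '' Set.Ici 1 = Set.Ioc 0 (lamBar β m μ)⁻¹ := by
  obtain ⟨hβ0, hβ1⟩ := hβ
  haveI := hμ.prob
  have hβinv : (1:ℝ) < 1 / β := one_lt_one_div hβ0 hβ1
  have hπc : Continuous (premium μ m) := prem_cont hμ m
  have hπpos : ∀ R, 0 < premium μ m R := prem_pos hμ hm
  have hden : ∀ R ∈ Set.Ico (1:ℝ) (1 / β), 0 < 1 - β * R := by
    intro R hR
    have h2 := hR.2
    rw [lt_div_iff₀ hβ0] at h2
    nlinarith [mul_comm R β]
  have hc0 : 0 < β / (1 - β) := div_pos hβ0 (by linarith)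
  -- value at 1
  have hprem1 : (∫ z, max (m * z - 1) 0 ∂μ) = premium μ m 1 := by
    simp [premium, max_comm]
  have hL : (lamBar β m μ)⁻¹ = β / (1 - β) * premium μ m 1 := by
    rw [lamBar, hprem1, mul_inv, inv_inv, inv_div]
  have hψf1 : psiF μ β m 1 = (lamBar β m μ)⁻¹ := by
    rw [psiF, hL]; ring
  have hψb1 : psiB μ β m 1 = (lamBar β m μ)⁻¹ := by
    rw [psiB, hL, div_one]
  -- continuity of ψ_f
  have hψfc : ContinuousOn (psiF μ β m) (Set.Ico 1 (1 / β)) := by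
    apply ContinuousOn.div ((continuous_const.mul hπc).continuousOn)
      ((continuous_const.sub (continuous_const.mul continuous_id)).continuousOn)
    exact fun R hR => (hden R hR).ne'
  -- strict monotonicity of ψ_f
  have hψfm : StrictMonoOn (psiF μ β m) (Set.Ico 1 (1 / β)) := by
    intro R hR R' hR' hlt
    have hdR := hden R hR
    have hdR' := hden R' hR'
    rw [psiF, psiF, div_lt_div_iff₀ hdR hdR']
    have hub := prem_upper hμ hm hlt.le
    have hk := key_ineq hμ ⟨hβ0, hβ1⟩ hm hA3 hR.1
    set q := (μ (Set.Ioi (R / m))).toReal with hq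
    have hq0 : 0 < q := measIoi_pos hμ _
    have h2 : (1 - β * R') * q < β * premium μ m R' := by
      nlinarith [mul_le_mul_of_nonneg_left hub hβ0.le]
    calc β * premium μ m R * (1 - β * R')
        ≤ β * (premium μ m R' + (R' - R) * q) * (1 - β * R') :=
          mul_le_mul_of_nonneg_right (mul_le_mul_of_nonneg_left hub hβ0.le) hdR'.le
      _ < β * premium μ m R' * (1 - β * R) := by
          nlinarith [mul_lt_mul_of_pos_left h2 (mul_pos hβ0 (sub_pos.2 hlt))]
  -- ψ_f tends to ∞
  have hlf : Tendsto (psiF μ β m) (𝓝[Set.Ico 1 (1 / β)] (1 / β)) atTop := by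
    have hnum : Tendsto (fun R => β * premium μ m R) (𝓝[Set.Ico 1 (1 / β)] (1 / β))
        (𝓝 (β * premium μ m (1 / β))) :=
      ((continuous_const.mul hπc).tendsto _).mono_left nhdsWithin_le_nhds
    have hdent : Tendsto (fun R => 1 - β * R) (𝓝[Set.Ico 1 (1 / β)] (1 / β)) (𝓝[>] 0) := by
      rw [tendsto_nhdsWithin_iff]
      constructor
      · have h0 : (1:ℝ) - β * (1 / β) = 0 := by field_simp; ring
        have ht : Tendsto (fun R : ℝ => 1 - β * R) (𝓝 (1 / β)) (𝓝 0) := by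
          have hcont : Continuous (fun R : ℝ => 1 - β * R) := by fun_prop
          simpa [mul_inv_cancel₀ hβ0.ne'] using hcont.tendsto (1 / β)
        exact ht.mono_left nhdsWithin_le_nhds
      · exact eventually_nhdsWithin_of_forall fun R hR => hden R hR
    have hmul := Filter.Tendsto.pos_mul_atTop (mul_pos hβ0 (hπpos _)) hnum
      (tendsto_inv_nhdsGT_zero.comp hdent)
    show Tendsto (fun R => β * premium μ m R / (1 - β * R)) _ atTop
    simpa [psiF, div_eq_mul_inv, Function.comp] using hmul
  -- image of ψ_f
  have h1mem : (1:ℝ) ∈ Set.Ico 1 (1 / β) := ⟨le_rfl, hβinv⟩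
  have himf : psiF μ β m '' Set.Ico 1 (1 / β) = Set.Ici ((lamBar β m μ)⁻¹) := by
    apply Set.Subset.antisymm
    · rintro _ ⟨R, hR, rfl⟩
      rw [Set.mem_Ici, ← hψf1]
      exact hψfm.monotoneOn h1mem hR hR.1
    · intro y hy
      rw [Set.mem_Ici, ← hψf1] at hy
      haveI : (𝓝[Set.Ico 1 (1 / β)] (1 / β)).NeBot := by
        rw [← mem_closure_iff_nhdsWithin_neBot,
          closure_Ico (by linarith : (1:ℝ) ≠ 1 / β)]
        exact ⟨hβinv.le, le_rfl⟩
      obtain ⟨R, hyR, hR⟩ := ((hlf.eventually (eventually_gt_atTop y)).and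
        eventually_mem_nhdsWithin).exists
      have hsub : Set.Icc 1 R ⊆ Set.Ico 1 (1 / β) :=
        fun x hx => ⟨hx.1, lt_of_le_of_lt hx.2 hR.2⟩
      have hmid := intermediate_value_Icc hR.1 (hψfc.mono hsub)
      exact Set.image_mono hsub (hmid ⟨hy, hyR.le⟩)
  -- continuity of ψ_b
  have hψbc : ContinuousOn (psiB μ β m) (Set.Ici 1) := by
    apply ContinuousOn.mul continuousOn_const
    exact ContinuousOn.div hπc.continuousOn continuousOn_id
      fun R hR => (lt_of_lt_of_le one_pos hR).ne'
  -- strict antitonicity of ψ_b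
  have hψba : StrictAntiOn (psiB μ β m) (Set.Ici 1) := by
    intro R hR R' hR' hlt
    have hRpos : (0:ℝ) < R := lt_of_lt_of_le one_pos hR
    have hR'pos : (0:ℝ) < R' := lt_of_lt_of_le one_pos hR'
    have hπlt : premium μ m R' < premium μ m R := by
      have h1 := prem_lower hμ hm hlt.le
      have hq := measIoi_pos hμ (R' / m)
      nlinarith
    rw [psiB, psiB]
    apply mul_lt_mul_of_pos_left _ hc0
    calc premium μ m R' / R' ≤ premium μ m R' / R := by
          rw [div_le_div_iff₀ hR'pos hRpos]
          exact mul_le_mul_of_nonneg_left hlt.le (prem_nonneg μ m R')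
      _ < premium μ m R / R := (div_lt_div_iff_of_pos_right hRpos).mpr hπlt
  -- ψ_b tends to 0
  have hψb0 : Tendsto (psiB μ β m) atTop (𝓝 0) := by
    have hb : Tendsto (fun R : ℝ => β / (1 - β) * premium μ m 1 * R⁻¹) atTop (𝓝 0) := by
      simpa using tendsto_inv_atTop_zero.const_mul (β / (1 - β) * premium μ m 1)
    refine squeeze_zero' ?_ ?_ hb
    · filter_upwards [eventually_ge_atTop (1:ℝ)] with R hR
      have hRpos : (0:ℝ) < R := by linarith
      exact mul_nonneg hc0.le (div_nonneg (prem_nonneg μ m R) hRpos.le)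
    · filter_upwards [eventually_ge_atTop (1:ℝ)] with R hR
      have hRpos : (0:ℝ) < R := by linarith
      show β / (1 - β) * (premium μ m R / R) ≤ β / (1 - β) * premium μ m 1 * R⁻¹
      rw [div_eq_mul_inv (premium μ m R) R, ← mul_assoc]
      gcongr
      exact prem_anti hμ hm hR
  -- image of ψ_b
  have himb : psiB μ β m '' Set.Ici 1 = Set.Ioc 0 ((lamBar β m μ)⁻¹) := by
    apply Set.Subset.antisymm
    · rintro _ ⟨R, hR, rfl⟩
      have hRpos : (0:ℝ) < R := lt_of_lt_of_le one_pos hR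
      refine ⟨mul_pos hc0 (div_pos (hπpos R) hRpos), ?_⟩
      rw [← hψb1]
      rcases eq_or_lt_of_le (Set.mem_Ici.mp hR) with h | h
      · rw [← h]
      · exact (hψba Set.self_mem_Ici hR h).le
    · rintro y ⟨hy0, hyL⟩
      obtain ⟨R, hyR, hR1⟩ := ((hψb0.eventually_lt_const hy0).and
        (eventually_ge_atTop (1:ℝ))).exists
      have hsub : Set.Icc 1 R ⊆ Set.Ici 1 := fun x hx => hx.1
      have hmid := intermediate_value_Icc' hR1 (hψbc.mono hsub)
      exact Set.image_mono hsub (hmid ⟨hyR.le, by rw [hψb1]; exact hyL⟩)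
  exact ⟨hψfc, hψfm, hψf1, hlf, himf, hψbc, hψba, hψb1, hψb0, himb⟩
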